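/- Let {X(λ)} be a *-resolution of the identity with sup‖X(λ)‖ = 1, and set F(λ) = X(λ)*X(λ). Then F(λ) ≤ F(μ) in the order of self-adjoint operators whenever λ < μ. -/

import Mathlib

open Filter Topology
open scoped InnerProductSpace

/-- For a *-resolution of the identity with `sup‖X(λ)‖ = 1` and `F(λ) = X(λ)*X(λ)`,
`F(λ) ≤ F(μ)` (in the order of self-adjoint operators) whenever `λ < μ`. -/
theorem star_resolution_F_monotone
    {H : Type*} [NormedAddCommGroup H] [InnerProductSpace ℂ H] [CompleteSpace H]
    (X : ℝ → H →L[ℂ] H)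
    (hnorm : (⨆ l : ℝ, ‖X l‖) = 1)
    (hmul : ∀ l m : ℝ, l < m → (X l).comp (X m) = X l ∧ (X m).comp (X l) = X l)
    (hbot : ∀ ξ : H, Tendsto (fun l => X l ξ) atBot (𝓝 0))
    (htop : ∀ ξ : H, Tendsto (fun l => X l ξ) atTop (𝓝 ξ))
    (hrc : ∀ (l : ℝ) (ξ : H), Tendsto (fun m => X m ξ) (𝓝[>] l) (𝓝 (X l ξ)))
    (hbotS : ∀ ξ : H, Tendsto (fun l => ContinuousLinearMap.adjoint (X l) ξ) atBot (𝓝 0))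
    (htopS : ∀ ξ : H, Tendsto (fun l => ContinuousLinearMap.adjoint (X l) ξ) atTop (𝓝 ξ))
    (hrcS : ∀ (l : ℝ) (ξ : H), Tendsto (fun m => ContinuousLinearMap.adjoint (X m) ξ)
      (𝓝[>] l) (𝓝 (ContinuousLinearMap.adjoint (X l) ξ)))
    (F : ℝ → H →L[ℂ] H)
    (hF : ∀ l, F l = (ContinuousLinearMap.adjoint (X l)).comp (X l)) :
    ∀ l m : ℝ, l < m → (F m - F l).IsPositive := by
  -- every X l has norm ≤ 1
  have hbdd : BddAbove (Set.range fun l : ℝ => ‖X l‖) := by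
    by_contra h
    rw [Real.iSup_of_not_bddAbove h] at hnorm
    norm_num at hnorm
  have hle1 : ∀ l : ℝ, ‖X l‖ ≤ 1 := by
    intro l
    calc ‖X l‖ ≤ ⨆ l : ℝ, ‖X l‖ := le_ciSup hbdd l
    _ = 1 := hnorm
  intro l m hlm
  have hsa : ∀ t : ℝ, IsSelfAdjoint (F t) := by
    intro t
    rw [hF]
    rw [IsSelfAdjoint, ContinuousLinearMap.star_eq_adjoint,
      ContinuousLinearMap.adjoint_comp, ContinuousLinearMap.adjoint_adjoint]
  constructor
  · exact ((hsa m).sub (hsa l)).isSymmetric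
  · intro x
    have key : ‖X l x‖ ≤ ‖X m x‖ := by
      have h1 : X l x = X l (X m x) := by
        conv_lhs => rw [← (hmul l m hlm).1]
        rfl
      rw [h1]
      calc ‖X l (X m x)‖ ≤ ‖X l‖ * ‖X m x‖ := (X l).le_opNorm _
      _ ≤ 1 * ‖X m x‖ := by
          exact mul_le_mul_of_nonneg_right (hle1 l) (norm_nonneg _)
      _ = ‖X m x‖ := one_mul _
    have hinner : ∀ t : ℝ, RCLike.re (⟪F t x, x⟫_ℂ) = ‖X t x‖ ^ 2 := by
      intro t
      rw [hF]
      simp only [ContinuousLinearMap.comp_apply]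
      rw [ContinuousLinearMap.adjoint_inner_left, inner_self_eq_norm_sq]
    rw [ContinuousLinearMap.reApplyInnerSelf]
    simp only [ContinuousLinearMap.sub_apply, inner_sub_left, map_sub]
    rw [hinner, hinner]
    have := sq_le_sq' (by linarith [norm_nonneg (X l x), norm_nonneg (X m x)]) key
    linarith
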